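/- Let k be a field of characteristic 2 and let A = k⟨g, x⟩/(g⁸ - 1, g x - x g - g(1 - g^μ), x² - μ·x) for μ ∈ {1, 4} (where μ·x means μ mod 2 times x, i.e. x for μ=1 and 0 for μ=4). Then A has dimension 16 over k, with basis {g^i x^j : 0 ≤ i ≤ 7, 0 ≤ j ≤ 1}. -/

import Mathlib

/-- The defining relations of `k⟨g,x⟩/(g⁸ - 1, gx - xg - g(1 - g^μ), x² - (μ mod 2)x)`:
generator `0` is `g`, generator `1` is `x`. -/
inductive Rel17 (k : Type*) [Field k] (μ : ℕ) :
    FreeAlgebra k (Fin 2) → FreeAlgebra k (Fin 2) → Prop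
  | gord : Rel17 k μ (FreeAlgebra.ι k 0 ^ 8) 1
  | comm : Rel17 k μ (FreeAlgebra.ι k 0 * FreeAlgebra.ι k 1 -
      FreeAlgebra.ι k 1 * FreeAlgebra.ι k 0)
      (FreeAlgebra.ι k 0 * (1 - FreeAlgebra.ι k 0 ^ μ))
  | xsq : Rel17 k μ (FreeAlgebra.ι k 1 ^ 2) ((μ % 2) • FreeAlgebra.ι k 1)

set_option linter.unusedSectionVars false
set_option linter.unusedTactic false

namespace R17
open Fin.NatCast
variable (k : Type*) [Field k]
abbrev M := Fin 8 × Fin 2 → k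
def cf (i : Fin 8) : k := if i.val % 2 = 1 then 1 else 0
def Gmap : M k →ₗ[k] M k := LinearMap.funLeft k k (fun p => (p.1 - 1, p.2))
def Xmap (μ : ℕ) : M k →ₗ[k] M k where
  toFun f p := (if p.2 = 1 then f (p.1, 0) + ((μ % 2 : ℕ) : k) * f p else 0)
    + cf k p.1 * f p + cf k (p.1 - (μ : Fin 8)) * f (p.1 - (μ : Fin 8), p.2)
  map_add' f g := by funext p; by_cases h : p.2 = 1 <;> simp [h] <;> ring
  map_smul' c f := by funext p; by_cases h : p.2 = 1 <;> simp [h] <;> ring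
lemma Gmap_apply (f : M k) (p : Fin 8 × Fin 2) : Gmap k f p = f (p.1 - 1, p.2) := rfl
lemma Xmap_apply (μ : ℕ) (f : M k) (p : Fin 8 × Fin 2) :
    Xmap k μ f p = (if p.2 = 1 then f (p.1, 0) + ((μ % 2 : ℕ) : k) * f p else 0)
    + cf k p.1 * f p + cf k (p.1 - (μ : Fin 8)) * f (p.1 - (μ : Fin 8), p.2) := rfl

lemma cf_odd (a : Fin 8) (e : Fin 8) (he : ∀ x : Fin 8, (x - e).val % 2 = 1 ↔ ¬ x.val % 2 = 1)
    (h : a.val % 2 = 1) : cf k (a - e) = 0 := by simp [cf, he, h]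
lemma cf_sub_one (a : Fin 8) : cf k (a - 1) = 1 - cf k a := by
  have he : (a - 1).val % 2 = 1 ↔ ¬ a.val % 2 = 1 := by revert a; decide
  by_cases h : a.val % 2 = 1 <;> simp [cf, he, h]
lemma cf_sub_two (a : Fin 8) : cf k (a - 2) = cf k a := by
  have he : (a - 2).val % 2 = 1 ↔ a.val % 2 = 1 := by revert a; decide
  by_cases h : a.val % 2 = 1 <;> simp [cf, he, h]
lemma cf_sub_four (a : Fin 8) : cf k (a - 4) = cf k a := by
  have he : (a - 4).val % 2 = 1 ↔ a.val % 2 = 1 := by revert a; decide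
  by_cases h : a.val % 2 = 1 <;> simp [cf, he, h]
lemma cf_sub_five (a : Fin 8) : cf k (a - 5) = 1 - cf k a := by
  have he : (a - 5).val % 2 = 1 ↔ ¬ a.val % 2 = 1 := by revert a; decide
  by_cases h : a.val % 2 = 1 <;> simp [cf, he, h]

lemma cf_sq (a : Fin 8) : cf k a * cf k a = cf k a := by
  by_cases h : a.val % 2 = 1 <;> simp [cf, h]
lemma cf_pow (a : Fin 8) : cf k a ^ 2 = cf k a := by
  rw [sq]; exact cf_sq k a

lemma rel_g : (Gmap k) ^ 8 = 1 := by
  refine LinearMap.ext fun f => funext fun ⟨a, b⟩ => ?_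
  simp only [pow_succ, pow_zero, one_mul, Module.End.mul_apply, Module.End.one_apply, Gmap_apply]
  have : a - 1 - 1 - 1 - 1 - 1 - 1 - 1 - 1 = a := by revert a; decide
  exact congrArg f (congrArg (·, b) this)

variable [CharP k 2]
set_option maxHeartbeats 1000000 in
lemma rel_comm1 :
    (Gmap k * Xmap k 1 - Xmap k 1 * Gmap k : Module.End k (M k)) =
      Gmap k * (1 - Gmap k ^ 1) := by
  have h2 : (2 : k) = 0 := CharTwo.two_eq_zero
  refine LinearMap.ext fun f => funext fun ⟨a, b⟩ => ?_
  fin_cases b <;>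
  · simp only [pow_succ, pow_zero, one_mul, Module.End.mul_apply, LinearMap.sub_apply,
      Module.End.one_apply, Pi.sub_apply, Gmap_apply, Xmap_apply, Nat.cast_one, Nat.cast_ofNat]
    norm_num [sub_sub, cf_sub_one, cf_sub_two, cf_sub_four, cf_sub_five]
    rw [← sub_eq_zero]
    ring_nf
    simp [h2, cf_sq, cf_pow, CharTwo.add_self_eq_zero]
set_option maxHeartbeats 1000000 in
lemma rel_comm4 :
    (Gmap k * Xmap k 4 - Xmap k 4 * Gmap k : Module.End k (M k)) =
      Gmap k * (1 - Gmap k ^ 4) := by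
  have h2 : (2 : k) = 0 := CharTwo.two_eq_zero
  refine LinearMap.ext fun f => funext fun ⟨a, b⟩ => ?_
  fin_cases b <;>
  · simp only [pow_succ, pow_zero, one_mul, Module.End.mul_apply, LinearMap.sub_apply,
      Module.End.one_apply, Pi.sub_apply, Gmap_apply, Xmap_apply, Nat.cast_one, Nat.cast_ofNat]
    norm_num [sub_sub, cf_sub_one, cf_sub_two, cf_sub_four, cf_sub_five]
    rw [← sub_eq_zero]
    ring_nf
    simp [h2, cf_sq, cf_pow, CharTwo.add_self_eq_zero]
set_option maxHeartbeats 1000000 in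
lemma rel_x1 :
    (Xmap k 1 ^ 2 : Module.End k (M k)) = (1 % 2 : ℕ) • Xmap k 1 := by
  have h2 : (2 : k) = 0 := CharTwo.two_eq_zero
  refine LinearMap.ext fun f => funext fun ⟨a, b⟩ => ?_
  fin_cases b <;>
  · simp only [pow_succ, pow_zero, one_mul, Module.End.mul_apply, LinearMap.smul_apply,
      Pi.smul_apply, Xmap_apply, Nat.cast_one, Nat.cast_ofNat]
    norm_num [sub_sub, cf_sub_one, cf_sub_two, cf_sub_four, cf_sub_five]
    rw [← sub_eq_zero]
    ring_nf
    simp [h2, cf_sq, cf_pow, CharTwo.add_self_eq_zero] <;> ring_nf <;> simp [h2]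
set_option maxHeartbeats 1000000 in
lemma rel_x4 :
    (Xmap k 4 ^ 2 : Module.End k (M k)) = (4 % 2 : ℕ) • Xmap k 4 := by
  have h2 : (2 : k) = 0 := CharTwo.two_eq_zero
  refine LinearMap.ext fun f => funext fun ⟨a, b⟩ => ?_
  fin_cases b <;>
  · simp only [pow_succ, pow_zero, one_mul, Module.End.mul_apply, LinearMap.smul_apply,
      Pi.smul_apply, Xmap_apply, Nat.cast_one, Nat.cast_ofNat]
    norm_num [sub_sub, cf_sub_one, cf_sub_two, cf_sub_four, cf_sub_five]
    rw [← sub_eq_zero]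
    ring_nf
    simp [h2, cf_sq, cf_pow, CharTwo.add_self_eq_zero]

noncomputable def rho (μ : ℕ) : FreeAlgebra k (Fin 2) →ₐ[k] Module.End k (M k) :=
  FreeAlgebra.lift k ![Gmap k, Xmap k μ]

lemma rho_g (μ : ℕ) : rho k μ (FreeAlgebra.ι k 0) = Gmap k := by simp [rho]
lemma rho_x (μ : ℕ) : rho k μ (FreeAlgebra.ι k 1) = Xmap k μ := by simp [rho]

lemma rel_comm (μ : ℕ) (hμ : μ = 1 ∨ μ = 4) :
    (Gmap k * Xmap k μ - Xmap k μ * Gmap k : Module.End k (M k)) =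
      Gmap k * (1 - Gmap k ^ μ) := by
  rcases hμ with h | h <;> subst h
  · exact rel_comm1 k
  · exact rel_comm4 k

lemma rel_x (μ : ℕ) (hμ : μ = 1 ∨ μ = 4) :
    (Xmap k μ ^ 2 : Module.End k (M k)) = (μ % 2) • Xmap k μ := by
  rcases hμ with h | h <;> subst h
  · exact rel_x1 k
  · exact rel_x4 k

lemma rho_rel (μ : ℕ) (hμ : μ = 1 ∨ μ = 4) :
    ∀ ⦃a b⦄, Rel17 k μ a b → rho k μ a = rho k μ b := by
  intro a b r
  induction r with
  | gord => rw [map_pow, map_one, rho_g, rel_g]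
  | comm =>
      rw [map_sub, map_mul, map_mul, map_mul, map_sub, map_one, map_pow, rho_g, rho_x]
      exact rel_comm k μ hμ
  | xsq =>
      rw [map_pow, map_nsmul, rho_x]
      exact rel_x k μ hμ

noncomputable def rhoQ (μ : ℕ) (hμ : μ = 1 ∨ μ = 4) :
    RingQuot (Rel17 k μ) →ₐ[k] Module.End k (M k) :=
  RingQuot.liftAlgHom k ⟨rho k μ, rho_rel k μ hμ⟩

def e0 : M k := Pi.single ((0 : Fin 8), (0 : Fin 2)) 1

lemma Gmap_single (a : Fin 8) (b : Fin 2) (c : k) :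
    Gmap k (Pi.single (a, b) c) = Pi.single (a + 1, b) c := by
  funext ⟨i, j⟩
  simp only [Gmap_apply, Pi.single_apply, Prod.ext_iff, Prod.mk.injEq, sub_eq_iff_eq_add]

lemma Gpow_single (n : ℕ) (a : Fin 8) (b : Fin 2) (c : k) :
    ((Gmap k) ^ n) (Pi.single (a, b) c) = Pi.single (a + (n : Fin 8), b) c := by
  induction n with
  | zero => simp
  | succ m ih =>
      rw [pow_succ', Module.End.mul_apply, ih, Gmap_single]
      congr 2
      push_cast
      rw [add_assoc]

lemma Xmap_e0 (μ : ℕ) : Xmap k μ (e0 k) = Pi.single ((0 : Fin 8), (1 : Fin 2)) 1 := by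
  funext ⟨i, j⟩
  fin_cases j <;>
    by_cases h0 : i = 0 <;> by_cases h1 : i - (μ : Fin 8) = 0 <;>
      simp [Xmap_apply, e0, Pi.single_apply, Prod.ext_iff, cf, h0, h1]
  all_goals
    intro hd
    have hz : ((μ : ℕ) : Fin 8) = 0 := Fin.natCast_eq_zero.mpr hd
    simp [hz]

section Main
variable (μ : ℕ)

noncomputable def Gq : RingQuot (Rel17 k μ) :=
  RingQuot.mkAlgHom k (Rel17 k μ) (FreeAlgebra.ι k 0)
noncomputable def Xq : RingQuot (Rel17 k μ) :=
  RingQuot.mkAlgHom k (Rel17 k μ) (FreeAlgebra.ι k 1)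
noncomputable def v (p : Fin 8 × Fin 2) : RingQuot (Rel17 k μ) :=
  Gq k μ ^ (p.1 : ℕ) * Xq k μ ^ (p.2 : ℕ)

lemma Gq8 : Gq k μ ^ 8 = 1 := by
  rw [Gq, ← map_pow, ← map_one (RingQuot.mkAlgHom k (Rel17 k μ))]
  exact RingQuot.mkAlgHom_rel k Rel17.gord

lemma XqGq : Xq k μ * Gq k μ = Gq k μ * Xq k μ - Gq k μ + Gq k μ ^ (μ + 1) := by
  have h := RingQuot.mkAlgHom_rel k (Rel17.comm (k := k) (μ := μ))
  simp only [map_sub, map_mul, map_one, map_pow] at h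
  rw [← Gq, ← Xq] at h
  have h' : Gq k μ * Xq k μ - Xq k μ * Gq k μ = Gq k μ * (1 - Gq k μ ^ μ) := h
  rw [mul_sub, mul_one, ← pow_succ'] at h'
  have h'' : Xq k μ * Gq k μ = Gq k μ * Xq k μ - (Gq k μ - Gq k μ ^ (μ + 1)) := by
    rw [← h']; abel
  rw [h'']; abel

lemma Xq2 : Xq k μ ^ 2 = (μ % 2) • Xq k μ := by
  have h := RingQuot.mkAlgHom_rel k (Rel17.xsq (k := k) (μ := μ))
  simp only [map_pow, map_nsmul] at h
  rw [← Xq] at h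
  exact h

variable (hμ : μ = 1 ∨ μ = 4)

lemma rhoQ_Gq : rhoQ k μ hμ (Gq k μ) = Gmap k := by
  rw [Gq, rhoQ, RingQuot.liftAlgHom_mkAlgHom_apply, rho_g]
lemma rhoQ_Xq : rhoQ k μ hμ (Xq k μ) = Xmap k μ := by
  rw [Xq, rhoQ, RingQuot.liftAlgHom_mkAlgHom_apply, rho_x]

noncomputable def phi : RingQuot (Rel17 k μ) →ₗ[k] M k where
  toFun y := rhoQ k μ hμ y (e0 k)
  map_add' a b := by simp
  map_smul' c a := by simp

lemma phi_v (p : Fin 8 × Fin 2) : phi k μ hμ (v k μ p) = Pi.single p 1 := by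
  obtain ⟨i, j⟩ := p
  have : phi k μ hμ (v k μ (i, j)) =
      ((Gmap k) ^ (i : ℕ)) (((Xmap k μ) ^ (j : ℕ)) (e0 k)) := by
    simp only [phi, v, LinearMap.coe_mk, AddHom.coe_mk, map_mul, map_pow, rhoQ_Gq, rhoQ_Xq,
      Module.End.mul_apply]
  rw [this]
  fin_cases j
  · simp only [Fin.val_zero, pow_zero, Module.End.one_apply, e0, Gpow_single]
    congr 2
    simp [Fin.cast_val_eq_self]
  · simp only [Fin.val_one, pow_one, Xmap_e0, Gpow_single]
    congr 2
    simp [Fin.cast_val_eq_self]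

include hμ in
lemma v_li : LinearIndependent k (v k μ) := by
  apply LinearIndependent.of_comp (phi k μ hμ)
  have : (phi k μ hμ) ∘ (v k μ) = fun p => (Pi.basisFun k (Fin 8 × Fin 2)) p := by
    funext p
    simp [phi_v k μ hμ p]
  rw [this]
  exact (Pi.basisFun k (Fin 8 × Fin 2)).linearIndependent


include hμ in
lemma v_span : ⊤ ≤ Submodule.span k (Set.range (v k μ)) := by
  set S := Submodule.span k (Set.range (v k μ)) with hS
  have hv : ∀ p, v k μ p ∈ S := fun p => Submodule.subset_span ⟨p, rfl⟩
  have hred : ∀ n : ℕ, Gq k μ ^ n = Gq k μ ^ (n % 8) := by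
    intro n
    conv_lhs => rw [← Nat.div_add_mod n 8]
    rw [pow_add, pow_mul, Gq8, one_pow, one_mul]
  have hGpow : ∀ n : ℕ, Gq k μ ^ n ∈ S := by
    intro n
    rw [hred n]
    have := hv (⟨n % 8, Nat.mod_lt _ (by norm_num)⟩, 0)
    simpa [v] using this
  have hGXpow : ∀ n : ℕ, Gq k μ ^ n * Xq k μ ∈ S := by
    intro n
    rw [hred n]
    have := hv (⟨n % 8, Nat.mod_lt _ (by norm_num)⟩, 1)
    simpa [v] using this
  have hmulG : ∀ s, s ∈ S → s * Gq k μ ∈ S := by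
    intro s hs
    refine Submodule.span_induction ?_ ?_ ?_ ?_ hs
    · rintro _ ⟨⟨i, j⟩, rfl⟩
      fin_cases j
      · show v k μ (i, 0) * Gq k μ ∈ S
        have : v k μ (i, 0) * Gq k μ = Gq k μ ^ ((i : ℕ) + 1) := by
          simp [v, pow_succ]
        rw [this]; exact hGpow _
      · show v k μ (i, 1) * Gq k μ ∈ S
        have : v k μ (i, 1) * Gq k μ =
            Gq k μ ^ ((i : ℕ) + 1) * Xq k μ - Gq k μ ^ ((i : ℕ) + 1)
              + Gq k μ ^ ((i : ℕ) + 1 + μ) := by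
          simp only [v, Fin.val_one, Fin.val_zero, pow_one, Fin.isValue]
          rw [mul_assoc, XqGq, mul_add, mul_sub]
          rw [← mul_assoc, ← pow_succ, ← pow_add,
            show (i : ℕ) + (μ + 1) = (i : ℕ) + 1 + μ by omega]
        rw [this]
        exact S.add_mem (S.sub_mem (hGXpow _) (hGpow _)) (hGpow _)
    · simpa using S.zero_mem
    · intro x y _ _ hx hy
      rw [add_mul]; exact S.add_mem hx hy
    · intro c x _ hx
      rw [smul_mul_assoc]; exact S.smul_mem c hx
  have hmulX : ∀ s, s ∈ S → s * Xq k μ ∈ S := by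
    intro s hs
    refine Submodule.span_induction ?_ ?_ ?_ ?_ hs
    · rintro _ ⟨⟨i, j⟩, rfl⟩
      fin_cases j
      · show v k μ (i, 0) * Xq k μ ∈ S
        have : v k μ (i, 0) * Xq k μ = Gq k μ ^ (i : ℕ) * Xq k μ := by simp [v]
        rw [this]; exact hGXpow _
      · show v k μ (i, 1) * Xq k μ ∈ S
        have : v k μ (i, 1) * Xq k μ = (μ % 2) • (Gq k μ ^ (i : ℕ) * Xq k μ) := by
          simp only [v, Fin.val_one, Fin.val_zero, pow_one, Fin.isValue]
          rw [mul_assoc, ← sq, Xq2, mul_smul_comm]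
        rw [this]
        exact S.smul_mem _ (hGXpow _)
    · simpa using S.zero_mem
    · intro x y _ _ hx hy
      rw [add_mul]; exact S.add_mem hx hy
    · intro c x _ hx
      rw [smul_mul_assoc]; exact S.smul_mem c hx
  have hone : (1 : RingQuot (Rel17 k μ)) ∈ S := by
    have := hv (0, 0); simpa [v] using this
  have key : ∀ w : FreeAlgebra k (Fin 2), ∀ s, s ∈ S →
      s * RingQuot.mkAlgHom k (Rel17 k μ) w ∈ S := by
    intro w
    induction w using FreeAlgebra.induction with
    | grade0 r =>
        intro s hs
        rw [AlgHom.commutes, ← Algebra.commutes, ← Algebra.smul_def]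
        exact S.smul_mem r hs
    | grade1 x =>
        fin_cases x
        · intro s hs
          show s * RingQuot.mkAlgHom k (Rel17 k μ) (FreeAlgebra.ι k 0) ∈ S
          exact hmulG s hs
        · intro s hs
          show s * RingQuot.mkAlgHom k (Rel17 k μ) (FreeAlgebra.ι k 1) ∈ S
          exact hmulX s hs
    | mul a b ha hb =>
        intro s hs
        rw [map_mul, ← mul_assoc]
        exact hb _ (ha _ hs)
    | add a b ha hb =>
        intro s hs
        rw [map_add, mul_add]
        exact S.add_mem (ha _ hs) (hb _ hs)
  intro z _
  obtain ⟨w, rfl⟩ := RingQuot.mkAlgHom_surjective k (Rel17 k μ) z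
  simpa using key w 1 hone

end Main
end R17

theorem dim_sixteen_rank_one (k : Type*) [Field k] [CharP k 2]
    (μ : ℕ) (hμ : μ = 1 ∨ μ = 4) :
    (∃ b : Module.Basis (Fin 8 × Fin 2) k (RingQuot (Rel17 k μ)),
        ∀ i : Fin 8, ∀ j : Fin 2,
          b (i, j) = RingQuot.mkAlgHom k (Rel17 k μ) (FreeAlgebra.ι k 0) ^ (i : ℕ) *
            RingQuot.mkAlgHom k (Rel17 k μ) (FreeAlgebra.ι k 1) ^ (j : ℕ)) ∧
      Module.finrank k (RingQuot (Rel17 k μ)) = 16 := by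
  let b : Module.Basis (Fin 8 × Fin 2) k (RingQuot (Rel17 k μ)) :=
    Module.Basis.mk (R17.v_li k μ hμ) (R17.v_span k μ hμ)
  refine ⟨⟨b, fun i j => ?_⟩, ?_⟩
  · rw [Module.Basis.mk_apply]; rfl
  · rw [Module.finrank_eq_card_basis b]; simp
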